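/- Let f₁, f₂ : ℝ → ℝ be continuously differentiable, let Ω ⊆ ℝ be a compact interval, let Z = {x ∈ Ω : f₁(x) = f₂(x)}, and let c̃ > 0. Assume |f₁′(x) − f₂′(x)| > 2/c̃ for every x ∈ Z. Then there exists 𝔯 > 0 such that for every x₀ ∈ Z and every x₁ ∈ Ω with |x₁ − x₀| ≤ 𝔯, one has |f₁(x₁) − f₂(x₁)| ≥ |x₁ − x₀|/c̃. -/

import Mathlib

/-- One-dimensional case (Case 1, d = 1) of the proof of Proposition 3.5: if the derivatives
of `f₁` and `f₂` are separated by more than `2/c̃` on the tie set `Z ⊆ Ω`, then near `Z` the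
gap `|f₁ − f₂|` grows at least linearly (with slope `1/c̃`) in the distance to the tie
point. -/
theorem stmt8 (f₁ f₂ : ℝ → ℝ) (h₁ : ContDiff ℝ 1 f₁) (h₂ : ContDiff ℝ 1 f₂)
    (a b : ℝ) (hab : a ≤ b) (Ω Z : Set ℝ) (hΩ : Ω = Set.Icc a b)
    (hZ : Z = {x ∈ Ω | f₁ x = f₂ x}) (ctil : ℝ) (hc : 0 < ctil)
    (hder : ∀ x ∈ Z, 2 / ctil < |deriv f₁ x - deriv f₂ x|) :
    ∃ r > 0, ∀ x₀ ∈ Z, ∀ x₁ ∈ Ω, |x₁ - x₀| ≤ r →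
      |x₁ - x₀| / ctil ≤ |f₁ x₁ - f₂ x₁| := by
  set g : ℝ → ℝ := fun x => f₁ x - f₂ x with hg
  have hgC : ContDiff ℝ 1 g := h₁.sub h₂
  have hgd : Differentiable ℝ g := hgC.differentiable one_ne_zero
  have hderg : ∀ x, deriv g x = deriv f₁ x - deriv f₂ x := fun x =>
    deriv_fun_sub (h₁.differentiable one_ne_zero x) (h₂.differentiable one_ne_zero x)
  have hcont : Continuous (deriv g) := hgC.continuous_deriv le_rfl
  have hK : IsCompact (Set.Icc a b) := isCompact_Icc
  have huc : UniformContinuousOn (deriv g) (Set.Icc a b) :=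
    hK.uniformContinuousOn_of_continuous hcont.continuousOn
  rw [Metric.uniformContinuousOn_iff] at huc
  have hε : (0:ℝ) < 1 / ctil := by positivity
  obtain ⟨δ, hδ, hucd⟩ := huc (1 / ctil) hε
  refine ⟨δ / 2, by positivity, ?_⟩
  intro x₀ hx₀ x₁ hx₁ hr
  have hx₀Ω : x₀ ∈ Set.Icc a b := by rw [hZ, hΩ] at hx₀; exact hx₀.1
  have hx₀eq : f₁ x₀ = f₂ x₀ := by rw [hZ] at hx₀; exact hx₀.2
  rw [hΩ] at hx₁
  -- derivative lower bound near x₀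
  have hbound : ∀ x ∈ Set.Icc a b, |x - x₀| ≤ δ / 2 → 1 / ctil ≤ |deriv g x| := by
    intro x hx hxr
    have h1 : dist (deriv g x) (deriv g x₀) < 1 / ctil := by
      apply hucd x hx x₀ hx₀Ω
      rw [Real.dist_eq]
      linarith
    have h2 : 2 / ctil < |deriv g x₀| := by rw [hderg]; exact hder x₀ hx₀
    have h3 : |deriv g x₀| - |deriv g x| ≤ |deriv g x - deriv g x₀| := by
      have := abs_sub_abs_le_abs_sub (deriv g x₀) (deriv g x)
      rw [abs_sub_comm] at this
      linarith
    rw [Real.dist_eq] at h1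
    have h4 : 2 / ctil = 1 / ctil + 1 / ctil := by ring
    linarith
  rcases eq_or_ne x₁ x₀ with h | h
  · subst h
    simp only [hx₀eq, sub_self, abs_zero, zero_div, le_refl, abs_nonneg]
  -- mean value theorem between x₀ and x₁
  obtain ⟨c, hcmem, hceq⟩ :
      ∃ c, (min x₀ x₁ < c ∧ c < max x₀ x₁) ∧
        deriv g c = (g x₁ - g x₀) / (x₁ - x₀) := by
    rcases lt_or_gt_of_ne h with hlt | hgt
    · obtain ⟨c, hc1, hc2⟩ := exists_deriv_eq_slope g hlt
        hgd.continuous.continuousOn hgd.differentiableOn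
      refine ⟨c, ?_, ?_⟩
      · rw [min_eq_right hlt.le, max_eq_left hlt.le]
        exact ⟨hc1.1, hc1.2⟩
      · rw [hc2]
        rw [div_eq_div_iff (by linarith) (by intro hh; apply h; linarith)]
        ring
    · obtain ⟨c, hc1, hc2⟩ := exists_deriv_eq_slope g hgt
        hgd.continuous.continuousOn hgd.differentiableOn
      refine ⟨c, ?_, ?_⟩
      · rw [min_eq_left hgt.le, max_eq_right hgt.le]
        exact ⟨hc1.1, hc1.2⟩
      · exact hc2
  have hcIcc : c ∈ Set.Icc a b := by
    constructor
    · calc a ≤ min x₀ x₁ := le_min hx₀Ω.1 hx₁.1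
      _ ≤ c := hcmem.1.le
    · calc c ≤ max x₀ x₁ := hcmem.2.le
      _ ≤ b := max_le hx₀Ω.2 hx₁.2
  have hcr : |c - x₀| ≤ δ / 2 := by
    rw [abs_sub_le_iff]
    rw [abs_sub_le_iff] at hr
    rcases le_total x₀ x₁ with hle | hle
    · rw [min_eq_left hle, max_eq_right hle] at hcmem
      constructor <;> linarith [hcmem.1, hcmem.2, hr.1]
    · rw [min_eq_right hle, max_eq_left hle] at hcmem
      constructor <;> linarith [hcmem.1, hcmem.2, hr.2]
  have hb := hbound c hcIcc hcr
  have hne : x₁ - x₀ ≠ 0 := sub_ne_zero.mpr h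
  have heq : g x₁ - g x₀ = deriv g c * (x₁ - x₀) := by
    field_simp at hceq
    linarith [hceq]
  have habs : |g x₁ - g x₀| = |deriv g c| * |x₁ - x₀| := by
    rw [heq, abs_mul]
  have hg0 : g x₀ = 0 := by simp [hg, hx₀eq]
  have : |x₁ - x₀| / ctil ≤ |g x₁ - g x₀| := by
    rw [habs, div_eq_mul_inv, mul_comm]
    have : (ctil)⁻¹ = 1 / ctil := by ring
    rw [this]
    exact mul_le_mul_of_nonneg_right hb (abs_nonneg _)
  rw [hg0, sub_zero] at this
  exact this
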